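/- The set {a^i, da^i, ba^i, ca^i : 0 ≤ i ≤ 5} is a k-linear basis of H; in particular H has dimension 24 over k. -/

import Mathlib

/- STATEMENT 1: {a^i, d a^i, b a^i, c a^i : 0 ≤ i ≤ 5} is a k-linear basis of H;
in particular H is 24-dimensional over k. -/

open scoped TensorProduct
namespace Paper24

variable (k : Type) [Field k] (ξ : k)

/-- The generator `a` of the free algebra on four generators. -/
noncomputable def a₀ : FreeAlgebra k (Fin 4) := FreeAlgebra.ι k 0
/-- The generator `b`. -/
noncomputable def b₀ : FreeAlgebra k (Fin 4) := FreeAlgebra.ι k 1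
/-- The generator `c`. -/
noncomputable def c₀ : FreeAlgebra k (Fin 4) := FreeAlgebra.ι k 2
/-- The generator `d`. -/
noncomputable def d₀ : FreeAlgebra k (Fin 4) := FreeAlgebra.ι k 3

/-- The defining relations of the Hopf algebra `H`; quotienting the free algebra by the
relation `r ~ r'` for each constructor is the same as quotienting by the two-sided ideal
generated by the corresponding differences. -/
inductive HRel : FreeAlgebra k (Fin 4) → FreeAlgebra k (Fin 4) → Prop
  | a6 : HRel (a₀ k ^ 6) 1
  | b2 : HRel (b₀ k ^ 2) 0
  | c2 : HRel (c₀ k ^ 2) 0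
  | d6 : HRel (d₀ k ^ 6) 1
  | a2d2 : HRel (a₀ k ^ 2) (d₀ k ^ 2)
  | ad : HRel (a₀ k * d₀ k) (d₀ k * a₀ k)
  | bc : HRel (b₀ k * c₀ k) 0
  | cb : HRel (c₀ k * b₀ k) 0
  | ab : HRel (a₀ k * b₀ k) (ξ • (b₀ k * a₀ k))
  | ac : HRel (a₀ k * c₀ k) (ξ • (c₀ k * a₀ k))
  | db : HRel (d₀ k * b₀ k) (-(ξ • (b₀ k * d₀ k)))
  | dc : HRel (d₀ k * c₀ k) (-(ξ • (c₀ k * d₀ k)))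
  | bd : HRel (b₀ k * d₀ k) (c₀ k * a₀ k)
  | ba : HRel (b₀ k * a₀ k) (c₀ k * d₀ k)

/-- The algebra `H`, as a quotient of the free algebra by the defining relations. -/
noncomputable abbrev HAlg := RingQuot (HRel k ξ)

/-- The image of `a` in `H`. -/
noncomputable def Ha : HAlg k ξ := RingQuot.mkAlgHom k (HRel k ξ) (a₀ k)
/-- The image of `b` in `H`. -/
noncomputable def Hb : HAlg k ξ := RingQuot.mkAlgHom k (HRel k ξ) (b₀ k)
/-- The image of `c` in `H`. -/
noncomputable def Hc : HAlg k ξ := RingQuot.mkAlgHom k (HRel k ξ) (c₀ k)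
/-- The image of `d` in `H`. -/
noncomputable def Hd : HAlg k ξ := RingQuot.mkAlgHom k (HRel k ξ) (d₀ k)

end Paper24

open Paper24

/-- The 24 putative basis elements of `H`: `(0,i) ↦ a^i`, `(1,i) ↦ d a^i`, `(2,i) ↦ b a^i`,
`(3,i) ↦ c a^i`. -/
noncomputable def HBasisElem (k : Type) [Field k] (ξ : k) (p : Fin 4 × Fin 6) : HAlg k ξ :=
  (match p.1 with
    | 0 => 1
    | 1 => Hd k ξ
    | 2 => Hb k ξ
    | 3 => Hc k ξ) * Ha k ξ ^ (p.2 : ℕ)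

namespace Stmt1Aux
open Matrix MonoidAlgebra Paper24

noncomputable section

/-- The group `Z/6 × Z/2`, written multiplicatively. -/
abbrev G6 := Multiplicative (ZMod 6 × ZMod 2)

def gx : G6 := Multiplicative.ofAdd (1, 0)
def gy : G6 := Multiplicative.ofAdd (0, 1)

lemma g1 : gx ^ 6 = 1 := by decide
lemma g2 : (gx * gy) ^ 6 = 1 := by decide
lemma gA2D2 : gx * gy * (gx * gy) = gx * gx := by decide
lemma gAD : gx * (gx * gy) = gx * gy * gx := by decide
lemma gDC : gx * gy * gy = gx := by decide
lemma gCD : gy * (gx * gy) = gx := by decide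
lemma gBD : gy * gx = gx * gy := by decide

lemma e1 : ∀ i j : Fin 6, (gx ^ (i : ℕ) = gx ^ (j : ℕ)) ↔ i = j := by decide
lemma e2 : ∀ i j : Fin 6, ¬(gx ^ (i : ℕ) = gx * gy * gx ^ (j : ℕ)) := by decide
lemma e3 : ∀ i j : Fin 6, ¬(gx * gy * gx ^ (i : ℕ) = gx ^ (j : ℕ)) := by decide
lemma e4 : ∀ i j : Fin 6,
    (gx * gy * gx ^ (i : ℕ) = gx * gy * gx ^ (j : ℕ)) ↔ i = j := by decide
lemma e5 : ∀ i j : Fin 6, ¬(gx ^ (i : ℕ) = gy * gx ^ (j : ℕ)) := by decide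
lemma e6 : ∀ i j : Fin 6, ¬(gy * gx ^ (i : ℕ) = gx ^ (j : ℕ)) := by decide
lemma e7 : ∀ i j : Fin 6, (gy * gx ^ (i : ℕ) = gy * gx ^ (j : ℕ)) ↔ i = j := by decide

abbrev Mat (k : Type) [Field k] := Matrix (Fin 2) (Fin 2) (MonoidAlgebra k G6)

def fA (k : Type) [Field k] (ξ : k) : Mat k := !![single gx ξ, 0; 0, single gx 1]
def fB (k : Type) [Field k] : Mat k := !![0, single 1 1; 0, 0]
def fC (k : Type) [Field k] : Mat k := !![0, single gy 1; 0, 0]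
def fD (k : Type) [Field k] (ξ : k) : Mat k :=
  !![single (gx * gy) (-ξ), 0; 0, single (gx * gy) 1]

variable (k : Type) [Field k] (ξ : k)

lemma zf2 : (!![0, 0; 0, 0] : Mat k) = 0 := by
  ext i j; fin_cases i <;> fin_cases j <;> rfl

def fGen : Fin 4 → Mat k := ![fA k ξ, fB k, fC k, fD k ξ]

lemma fA_pow (n : ℕ) :
    fA k ξ ^ n = !![single (gx ^ n) (ξ ^ n), 0; 0, single (gx ^ n) 1] := by
  induction n with
  | zero => simp [one_fin_two, MonoidAlgebra.one_def]
  | succ n ih =>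
      rw [pow_succ, ih, fA, mul_fin_two]
      simp [single_mul_single, pow_succ]

lemma fD_pow (n : ℕ) :
    fD k ξ ^ n = !![single ((gx * gy) ^ n) ((-ξ) ^ n), 0; 0, single ((gx * gy) ^ n) 1] := by
  induction n with
  | zero => simp [one_fin_two, MonoidAlgebra.one_def]
  | succ n ih =>
      rw [pow_succ, ih, fD, mul_fin_two]
      simp [single_mul_single, pow_succ]

lemma relA6 (h6 : ξ ^ 6 = 1) : fA k ξ ^ 6 = 1 := by
  rw [fA_pow, g1, h6]; simp [one_fin_two, MonoidAlgebra.one_def]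

lemma relD6 (h6 : ξ ^ 6 = 1) : fD k ξ ^ 6 = 1 := by
  rw [fD_pow, g2]
  have : (-ξ) ^ 6 = 1 := by rw [neg_pow, h6]; norm_num
  rw [this]; simp [one_fin_two, MonoidAlgebra.one_def]

lemma relB2 : fB k * fB k = 0 := by
  rw [fB, mul_fin_two]
  simp only [mul_zero, zero_mul, add_zero, zero_add]
  exact zf2 k

lemma relC2 : fC k * fC k = 0 := by
  rw [fC, mul_fin_two]
  simp only [mul_zero, zero_mul, add_zero, zero_add]
  exact zf2 k

lemma relBC : fB k * fC k = 0 := by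
  rw [fB, fC, mul_fin_two]
  simp only [mul_zero, zero_mul, add_zero, zero_add]
  exact zf2 k

lemma relCB : fC k * fB k = 0 := by
  rw [fC, fB, mul_fin_two]
  simp only [mul_zero, zero_mul, add_zero, zero_add]
  exact zf2 k

lemma relA2D2 : fA k ξ * fA k ξ = fD k ξ * fD k ξ := by
  ext i j
  fin_cases i <;> fin_cases j <;>
    simp [fA, fD, mul_fin_two, single_mul_single, gA2D2, neg_mul_neg]

lemma relAD : fA k ξ * fD k ξ = fD k ξ * fA k ξ := by
  ext i j
  fin_cases i <;> fin_cases j <;>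
    simp [fA, fD, mul_fin_two, single_mul_single, gAD, mul_neg, neg_mul]

lemma relAB : fA k ξ * fB k = ξ • (fB k * fA k ξ) := by
  ext i j
  fin_cases i <;> fin_cases j <;>
    simp [fA, fB, mul_fin_two, single_mul_single, Finsupp.smul_single]

lemma relAC : fA k ξ * fC k = ξ • (fC k * fA k ξ) := by
  ext i j
  fin_cases i <;> fin_cases j <;>
    simp [fA, fC, mul_fin_two, single_mul_single, Finsupp.smul_single, gBD]

lemma relDB : fD k ξ * fB k = -(ξ • (fB k * fD k ξ)) := by
  ext i j
  fin_cases i <;> fin_cases j <;>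
    simp [fD, fB, mul_fin_two, single_mul_single, Finsupp.smul_single]

lemma relDC : fD k ξ * fC k = -(ξ • (fC k * fD k ξ)) := by
  ext i j
  fin_cases i <;> fin_cases j <;>
    simp [fD, fC, mul_fin_two, single_mul_single, Finsupp.smul_single, gDC, gCD]

lemma relBD : fB k * fD k ξ = fC k * fA k ξ := by
  ext i j
  fin_cases i <;> fin_cases j <;>
    simp [fB, fC, fD, fA, mul_fin_two, single_mul_single, gBD]

lemma relBA : fB k * fA k ξ = fC k * fD k ξ := by
  ext i j
  fin_cases i <;> fin_cases j <;>
    simp [fB, fC, fD, fA, mul_fin_two, single_mul_single, gCD]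

/-- The lift of the generators to the free algebra respects the relations. -/
lemma relhold (h6 : ξ ^ 6 = 1) :
    ∀ ⦃x y : FreeAlgebra k (Fin 4)⦄, HRel k ξ x y →
      (FreeAlgebra.lift k (fGen k ξ)) x = (FreeAlgebra.lift k (fGen k ξ)) y := by
  intro x y h
  induction h <;>
    simp only [a₀, b₀, c₀, d₀, _root_.map_mul, map_pow, _root_.map_smul, _root_.map_one,
      _root_.map_zero, map_neg, FreeAlgebra.lift_ι_apply, fGen, Matrix.cons_val_zero,
      Matrix.cons_val_one, Matrix.head_cons, Matrix.cons_val_two, Matrix.tail_cons,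
      Matrix.cons_val_three, pow_two]
  case a6 => exact relA6 k ξ h6
  case b2 => exact relB2 k
  case c2 => exact relC2 k
  case d6 => exact relD6 k ξ h6
  case a2d2 => exact relA2D2 k ξ
  case ad => exact relAD k ξ
  case bc => exact relBC k
  case cb => exact relCB k
  case ab => exact relAB k ξ
  case ac => exact relAC k ξ
  case db => exact relDB k ξ
  case dc => exact relDC k ξ
  case bd => exact relBD k ξ
  case ba => exact relBA k ξ

/-- The representation `H → M₂(k[Z6 × Z2])`. -/
def φ (h6 : ξ ^ 6 = 1) : HAlg k ξ →ₐ[k] Mat k :=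
  RingQuot.liftAlgHom k ⟨FreeAlgebra.lift k (fGen k ξ), relhold k ξ h6⟩

variable (h6 : ξ ^ 6 = 1)

lemma φ_Ha : φ k ξ h6 (Ha k ξ) = fA k ξ := by
  rw [Ha, φ, RingQuot.liftAlgHom_mkAlgHom_apply, a₀, FreeAlgebra.lift_ι_apply]; rfl
lemma φ_Hb : φ k ξ h6 (Hb k ξ) = fB k := by
  rw [Hb, φ, RingQuot.liftAlgHom_mkAlgHom_apply, b₀, FreeAlgebra.lift_ι_apply]; rfl
lemma φ_Hc : φ k ξ h6 (Hc k ξ) = fC k := by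
  rw [Hc, φ, RingQuot.liftAlgHom_mkAlgHom_apply, c₀, FreeAlgebra.lift_ι_apply]; rfl
lemma φ_Hd : φ k ξ h6 (Hd k ξ) = fD k ξ := by
  rw [Hd, φ, RingQuot.liftAlgHom_mkAlgHom_apply, d₀, FreeAlgebra.lift_ι_apply]; rfl

/-- Explicit matrices for the images of the 24 candidate basis elements. -/
def imMat (p : Fin 4 × Fin 6) : Mat k :=
  match p.1 with
  | 0 => !![single (gx ^ (p.2 : ℕ)) (ξ ^ (p.2 : ℕ)), 0; 0, single (gx ^ (p.2 : ℕ)) 1]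
  | 1 => !![single (gx * gy * gx ^ (p.2 : ℕ)) (-ξ * ξ ^ (p.2 : ℕ)), 0;
            0, single (gx * gy * gx ^ (p.2 : ℕ)) 1]
  | 2 => !![0, single (gx ^ (p.2 : ℕ)) 1; 0, 0]
  | 3 => !![0, single (gy * gx ^ (p.2 : ℕ)) 1; 0, 0]

lemma φ_basisElem (p : Fin 4 × Fin 6) :
    φ k ξ h6 (HBasisElem k ξ p) = imMat k ξ p := by
  obtain ⟨t, i⟩ := p
  fin_cases t
  · show φ k ξ h6 (1 * Ha k ξ ^ (i : ℕ))
        = !![single (gx ^ (i : ℕ)) (ξ ^ (i : ℕ)), 0; 0, single (gx ^ (i : ℕ)) 1]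
    rw [one_mul, map_pow, φ_Ha, fA_pow]
  · show φ k ξ h6 (Hd k ξ * Ha k ξ ^ (i : ℕ))
        = !![single (gx * gy * gx ^ (i : ℕ)) (-ξ * ξ ^ (i : ℕ)), 0;
             0, single (gx * gy * gx ^ (i : ℕ)) 1]
    rw [_root_.map_mul, map_pow, φ_Hd, φ_Ha, fA_pow, fD, mul_fin_two]
    simp [single_mul_single]
  · show φ k ξ h6 (Hb k ξ * Ha k ξ ^ (i : ℕ)) = !![0, single (gx ^ (i : ℕ)) 1; 0, 0]
    rw [_root_.map_mul, map_pow, φ_Hb, φ_Ha, fA_pow, fB, mul_fin_two]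
    simp [single_mul_single]
  · show φ k ξ h6 (Hc k ξ * Ha k ξ ^ (i : ℕ)) = !![0, single (gy * gx ^ (i : ℕ)) 1; 0, 0]
    rw [_root_.map_mul, map_pow, φ_Hc, φ_Ha, fA_pow, fC, mul_fin_two]
    simp [single_mul_single]

/-- Where to look in the matrix for each basis element. -/
def row : Fin 4 → Fin 2 := ![1, 1, 0, 0]
def grp : Fin 4 × Fin 6 → G6 :=
  fun p => (![1, gx * gy, 1, gy] : Fin 4 → G6) p.1 * gx ^ (p.2 : ℕ)

/-- The coefficient-extracting linear map. -/
def Φ : Mat k →ₗ[k] (Fin 4 × Fin 6 → k) where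
  toFun M := fun q => (M (row q.1) 1).coeff (grp q)
  map_add' M N := by
    funext q
    exact Finsupp.add_apply _ _ _
  map_smul' r M := by
    funext q
    exact (Finsupp.smul_apply _ _ _).trans (smul_eq_mul _ _)

lemma Φ_apply (M : Mat k) (q : Fin 4 × Fin 6) :
    Φ k M q = (M (row q.1) 1).coeff (grp q) := rfl

set_option maxHeartbeats 1000000 in
lemma Φ_imMat (p : Fin 4 × Fin 6) : Φ k (imMat k ξ p) = Pi.single p 1 := by
  obtain ⟨t, i⟩ := p
  funext ⟨s, j⟩
  fin_cases t <;> fin_cases s <;>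
    simp [Φ_apply, imMat, grp, row, Pi.single_apply, Prod.ext_iff, Finsupp.single_apply, MonoidAlgebra.coeff_single_apply,
      single_mul_single, e1, e2, e3, e4, e5, e6, e7, eq_comm]

include h6 in
lemma li : LinearIndependent k (HBasisElem k ξ) := by
  apply LinearIndependent.of_comp ((Φ k).comp (φ k ξ h6).toLinearMap)
  have h : (⇑((Φ k).comp (φ k ξ h6).toLinearMap) ∘ HBasisElem k ξ)
      = fun p => Pi.single p (1 : k) := by
    funext p
    simp [Function.comp, φ_basisElem k ξ h6, Φ_imMat]
  rw [h]
  have hfun : (fun p => Pi.single p (1 : k)) = ⇑(Pi.basisFun k (Fin 4 × Fin 6)) := by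
    funext p
    rw [Pi.basisFun_apply]
  rw [hfun]
  exact (Pi.basisFun k (Fin 4 × Fin 6)).linearIndependent

end
end Stmt1Aux

namespace Stmt1Span
open Paper24 Stmt1Aux

noncomputable section
variable (k : Type) [Field k] (ξ : k)

local notation "A" => Ha k ξ
local notation "B" => Hb k ξ
local notation "C" => Hc k ξ
local notation "D" => Hd k ξ

lemma rmk {x y : FreeAlgebra k (Fin 4)} (h : HRel k ξ x y) :
    RingQuot.mkAlgHom k (HRel k ξ) x = RingQuot.mkAlgHom k (HRel k ξ) y :=
  RingQuot.mkAlgHom_rel k h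

lemma hA6 : A ^ 6 = 1 := by
  simpa [Ha, map_pow] using rmk k ξ (HRel.a6)
lemma hBB : B * B = 0 := by
  simpa [Hb, pow_two, map_pow, map_mul] using rmk k ξ (HRel.b2)
lemma hCC : C * C = 0 := by
  simpa [Hc, pow_two, map_pow, map_mul] using rmk k ξ (HRel.c2)
lemma hA2D2 : A * A = D * D := by
  simpa [Ha, Hd, pow_two, map_pow, map_mul] using rmk k ξ (HRel.a2d2)
lemma hAD : A * D = D * A := by
  simpa [Ha, Hd, map_mul] using rmk k ξ (HRel.ad)
lemma hBC : B * C = 0 := by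
  simpa [Hb, Hc, map_mul] using rmk k ξ (HRel.bc)
lemma hCB : C * B = 0 := by
  simpa [Hb, Hc, map_mul] using rmk k ξ (HRel.cb)
lemma hAB : A * B = ξ • (B * A) := by
  simpa [Ha, Hb, map_mul, map_smul] using rmk k ξ (HRel.ab)
lemma hAC : A * C = ξ • (C * A) := by
  simpa [Ha, Hc, map_mul, map_smul] using rmk k ξ (HRel.ac)
lemma hDB : D * B = -(ξ • (B * D)) := by
  simpa [Hd, Hb, map_mul, map_smul, map_neg] using rmk k ξ (HRel.db)
lemma hDC : D * C = -(ξ • (C * D)) := by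
  simpa [Hd, Hc, map_mul, map_smul, map_neg] using rmk k ξ (HRel.dc)
lemma hBD : B * D = C * A := by
  simpa [Ha, Hb, Hc, Hd, map_mul] using rmk k ξ (HRel.bd)
lemma hBA : B * A = C * D := by
  simpa [Ha, Hb, Hc, Hd, map_mul] using rmk k ξ (HRel.ba)

lemma negmul (x y : HAlg k ξ) : -x * y = -(x * y) := neg_mul x y

lemma powA_B (n : ℕ) : A ^ n * B = ξ ^ n • (B * A ^ n) := by
  induction n with
  | zero => simp
  | succ n ih =>
      rw [pow_succ, mul_assoc, hAB, mul_smul_comm, ← mul_assoc, ih, smul_mul_assoc,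
        smul_smul, pow_succ', mul_assoc]

lemma powA_C (n : ℕ) : A ^ n * C = ξ ^ n • (C * A ^ n) := by
  induction n with
  | zero => simp
  | succ n ih =>
      rw [pow_succ, mul_assoc, hAC, mul_smul_comm, ← mul_assoc, ih, smul_mul_assoc,
        smul_smul, pow_succ', mul_assoc]

lemma powA_D (n : ℕ) : A ^ n * D = D * A ^ n := by
  induction n with
  | zero => simp
  | succ n ih => rw [pow_succ, mul_assoc, hAD, ← mul_assoc, ih, mul_assoc]

lemma powA_mod (n : ℕ) : A ^ n = A ^ (n % 6) := by
  conv_lhs => rw [← Nat.div_add_mod n 6]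
  rw [pow_add, pow_mul, hA6, one_pow, one_mul]

def hd4 : Fin 4 → HAlg k ξ := ![1, Hd k ξ, Hb k ξ, Hc k ξ]

lemma HBasisElem_eq (p : Fin 4 × Fin 6) :
    HBasisElem k ξ p = hd4 k ξ p.1 * A ^ (p.2 : ℕ) := by
  obtain ⟨t, i⟩ := p
  fin_cases t <;> rfl

abbrev SS : Submodule k (HAlg k ξ) := Submodule.span k (Set.range (HBasisElem k ξ))

lemma memS (t : Fin 4) (n : ℕ) : hd4 k ξ t * A ^ n ∈ SS k ξ := by
  rw [powA_mod]
  have : hd4 k ξ t * A ^ (n % 6)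
      = HBasisElem k ξ (t, ⟨n % 6, Nat.mod_lt _ (by norm_num)⟩) := by
    rw [HBasisElem_eq]
  rw [this]
  exact Submodule.subset_span ⟨_, rfl⟩

lemma memS' (n : ℕ) : A ^ n ∈ SS k ξ := by
  simpa [hd4] using memS k ξ 0 n
lemma memSD (n : ℕ) : D * A ^ n ∈ SS k ξ := by
  simpa [hd4] using memS k ξ 1 n
lemma memSB (n : ℕ) : B * A ^ n ∈ SS k ξ := by
  simpa [hd4] using memS k ξ 2 n
lemma memSC (n : ℕ) : C * A ^ n ∈ SS k ξ := by
  simpa [hd4] using memS k ξ 3 n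

lemma mulA (t : Fin 4) (n : ℕ) : (hd4 k ξ t * A ^ n) * A ∈ SS k ξ := by
  rw [mul_assoc, ← pow_succ]
  exact memS k ξ t (n + 1)

lemma mulB (t : Fin 4) (n : ℕ) : (hd4 k ξ t * A ^ n) * B ∈ SS k ξ := by
  fin_cases t
  · show (1 * A ^ n) * B ∈ SS k ξ
    rw [one_mul, powA_B]
    exact Submodule.smul_mem _ _ (memSB k ξ n)
  · show (D * A ^ n) * B ∈ SS k ξ
    rw [mul_assoc, powA_B, mul_smul_comm, ← mul_assoc, hDB, negmul, smul_mul_assoc,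
      hBD, mul_assoc, ← pow_succ']
    exact Submodule.smul_mem _ _ (Submodule.neg_mem _
      (Submodule.smul_mem _ _ (memSC k ξ (n + 1))))
  · show (B * A ^ n) * B ∈ SS k ξ
    rw [mul_assoc, powA_B, mul_smul_comm, ← mul_assoc, hBB, zero_mul, smul_zero]
    exact Submodule.zero_mem _
  · show (C * A ^ n) * B ∈ SS k ξ
    rw [mul_assoc, powA_B, mul_smul_comm, ← mul_assoc, hCB, zero_mul, smul_zero]
    exact Submodule.zero_mem _

lemma mulC (t : Fin 4) (n : ℕ) : (hd4 k ξ t * A ^ n) * C ∈ SS k ξ := by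
  fin_cases t
  · show (1 * A ^ n) * C ∈ SS k ξ
    rw [one_mul, powA_C]
    exact Submodule.smul_mem _ _ (memSC k ξ n)
  · show (D * A ^ n) * C ∈ SS k ξ
    rw [mul_assoc, powA_C, mul_smul_comm, ← mul_assoc, hDC, negmul, smul_mul_assoc,
      ← hBA, mul_assoc, ← pow_succ']
    exact Submodule.smul_mem _ _ (Submodule.neg_mem _
      (Submodule.smul_mem _ _ (memSB k ξ (n + 1))))
  · show (B * A ^ n) * C ∈ SS k ξ
    rw [mul_assoc, powA_C, mul_smul_comm, ← mul_assoc, hBC, zero_mul, smul_zero]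
    exact Submodule.zero_mem _
  · show (C * A ^ n) * C ∈ SS k ξ
    rw [mul_assoc, powA_C, mul_smul_comm, ← mul_assoc, hCC, zero_mul, smul_zero]
    exact Submodule.zero_mem _

lemma mulD (t : Fin 4) (n : ℕ) : (hd4 k ξ t * A ^ n) * D ∈ SS k ξ := by
  fin_cases t
  · show (1 * A ^ n) * D ∈ SS k ξ
    rw [one_mul, powA_D]
    exact memSD k ξ n
  · show (D * A ^ n) * D ∈ SS k ξ
    rw [mul_assoc, powA_D, ← mul_assoc, ← hA2D2, mul_assoc, ← pow_succ', ← pow_succ']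
    exact memS' k ξ (n + 2)
  · show (B * A ^ n) * D ∈ SS k ξ
    rw [mul_assoc, powA_D, ← mul_assoc, hBD, mul_assoc, ← pow_succ']
    exact memSC k ξ (n + 1)
  · show (C * A ^ n) * D ∈ SS k ξ
    rw [mul_assoc, powA_D, ← mul_assoc, ← hBA, mul_assoc, ← pow_succ']
    exact memSB k ξ (n + 1)

lemma mul_gen_mem (g : Fin 4) : ∀ s ∈ SS k ξ,
    s * RingQuot.mkAlgHom k (HRel k ξ) (FreeAlgebra.ι k g) ∈ SS k ξ := by
  intro s hs
  induction hs using Submodule.span_induction with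
  | mem x hx =>
      obtain ⟨⟨t, i⟩, rfl⟩ := hx
      rw [HBasisElem_eq]
      fin_cases g
      · exact mulA k ξ t i
      · exact mulB k ξ t i
      · exact mulC k ξ t i
      · exact mulD k ξ t i
  | zero => simp [Submodule.zero_mem]
  | add x y _ _ hx hy => rw [add_mul]; exact Submodule.add_mem _ hx hy
  | smul r x _ hx => rw [smul_mul_assoc]; exact Submodule.smul_mem _ _ hx

lemma mul_mem_S : ∀ z : HAlg k ξ, ∀ s ∈ SS k ξ, s * z ∈ SS k ξ := by
  intro z
  obtain ⟨w, rfl⟩ := RingQuot.mkAlgHom_surjective k (HRel k ξ) z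
  induction w using FreeAlgebra.induction with
  | grade0 r =>
      intro s hs
      rw [AlgHom.commutes, Algebra.algebraMap_eq_smul_one, mul_smul_comm, mul_one]
      exact Submodule.smul_mem _ _ hs
  | grade1 x => exact mul_gen_mem k ξ x
  | mul a b ha hb =>
      intro s hs
      rw [map_mul, ← mul_assoc]
      exact hb _ (ha _ hs)
  | add a b ha hb =>
      intro s hs
      rw [map_add, mul_add]
      exact Submodule.add_mem _ (ha _ hs) (hb _ hs)

lemma one_mem_S : (1 : HAlg k ξ) ∈ SS k ξ := by
  simpa [hd4] using memS k ξ 0 0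

lemma span_top : ⊤ ≤ SS k ξ := by
  intro z _
  simpa using mul_mem_S k ξ z 1 (one_mem_S k ξ)

end
end Stmt1Span

theorem stmt_1 (k : Type) [Field k] [IsAlgClosed k] [CharZero k]
    (ξ : k) (hξ : IsPrimitiveRoot ξ 6) :
    (∃ B : Module.Basis (Fin 4 × Fin 6) k (HAlg k ξ), ∀ p, B p = HBasisElem k ξ p) ∧
    Module.finrank k (HAlg k ξ) = 24 := by
  have h6 : ξ ^ 6 = 1 := hξ.pow_eq_one
  have li := Stmt1Aux.li k ξ h6
  have sp := Stmt1Span.span_top k ξ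
  refine ⟨⟨Module.Basis.mk li sp, fun p => Module.Basis.mk_apply li sp p⟩, ?_⟩
  rw [Module.finrank_eq_card_basis (Module.Basis.mk li sp)]
  simp
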